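/- arXiv:1309.2781 — 2 statements merged into one kernel-verified Lean document; each statement's English description precedes it below -/
import Mathlib

section
/- Let (Ω, F, P) be a probability space, d ≥ 1, α ∈ ℕ^d a multiindex of order m = |α| ≥ 1, and 1 < p < ∞. Let X_n, X : Ω → ℝ^d be random vectors with X_n → X almost surely, and let G : Ω → ℝ be a bounded random variable. Suppose that for each n there is a random variable L_n ∈ L^p(Ω) with sup_n ‖L_n‖_{L^p} < ∞ such that the integration by parts identity E[∂_α g(X_n) G] = E[g(X_n) L_n] holds for every g ∈ C^m_b(ℝ^d). Then there exists H ∈ L^p(Ω) such that E[∂_α g(X) G] = E[g(X) H] for every g ∈ C^m_b(ℝ^d). -/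
open MeasureTheory Filter Topology

/-- Iterated partial derivative in direction `i`, applied `n` times. -/
noncomputable def pderivN {d : ℕ} (i : Fin d) :
    ℕ → (EuclideanSpace ℝ (Fin d) → ℝ) → EuclideanSpace ℝ (Fin d) → ℝ
  | 0, f => f
  | n + 1, f => fun x => fderiv ℝ (pderivN i n f) x (EuclideanSpace.single i 1)

/-- The iterated partial derivative `∂_α` associated to a multiindex `α ∈ ℕ^d`:
for each coordinate `i`, we differentiate `α i` times in direction `i`. -/
noncomputable def mderiv {d : ℕ} (α : Fin d → ℕ)
    (f : EuclideanSpace ℝ (Fin d) → ℝ) : EuclideanSpace ℝ (Fin d) → ℝ :=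
  (List.finRange d).foldr (fun i g => pderivN i (α i) g) f

/-- `g` belongs to `C^m_b(ℝ^d)`: it is `m`-times continuously differentiable and
bounded together with all its derivatives of order `≤ m`. -/
def CmBounded {d : ℕ} (m : ℕ) (g : EuclideanSpace ℝ (Fin d) → ℝ) : Prop :=
  ContDiff ℝ (m : ℕ∞) g ∧ ∀ k : ℕ, k ≤ m → ∃ B : ℝ, ∀ x, ‖iteratedFDeriv ℝ k g x‖ ≤ B

lemma cmb_fderiv_apply {d M : ℕ} {g : EuclideanSpace ℝ (Fin d) → ℝ}
    {v : EuclideanSpace ℝ (Fin d)} (hv : ‖v‖ ≤ 1) (hg : CmBounded (M + 1) g) :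
    CmBounded M (fun x => fderiv ℝ g x v) := by
  have hder : ContDiff ℝ (M : ℕ∞) (fderiv ℝ g) := by
    refine hg.1.fderiv_right ?_
    norm_cast
  constructor
  · exact hder.clm_apply contDiff_const
  · intro k hk
    obtain ⟨B, hB⟩ := hg.2 (k + 1) (by omega)
    refine ⟨B, fun x => ?_⟩
    have h1 : ‖iteratedFDeriv ℝ k (fun y => fderiv ℝ g y v) x‖
        ≤ ‖v‖ * ‖iteratedFDeriv ℝ k (fderiv ℝ g) x‖ :=
      norm_iteratedFDeriv_clm_apply_const hder.contDiffAt (by exact_mod_cast hk)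
    have h2 : ‖iteratedFDeriv ℝ k (fderiv ℝ g) x‖ = ‖iteratedFDeriv ℝ (k + 1) g x‖ :=
      norm_iteratedFDeriv_fderiv
    have hBnn : 0 ≤ B := le_trans (norm_nonneg _) (hB x)
    calc ‖iteratedFDeriv ℝ k (fun y => fderiv ℝ g y v) x‖
        ≤ ‖v‖ * ‖iteratedFDeriv ℝ (k + 1) g x‖ := by rw [← h2]; exact h1
      _ ≤ 1 * B := by
          apply mul_le_mul hv (hB x) (norm_nonneg _) zero_le_one
      _ = B := one_mul B

lemma cmb_pderivN {d : ℕ} (i : Fin d) :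
    ∀ (n M : ℕ) (g : EuclideanSpace ℝ (Fin d) → ℝ),
      CmBounded (n + M) g → CmBounded M (pderivN i n g) := by
  intro n
  induction n with
  | zero => intro M g hg; simpa [pderivN] using hg
  | succ n ih =>
    intro M g hg
    show CmBounded M (fun x => fderiv ℝ (pderivN i n g) x (EuclideanSpace.single i 1))
    have h1 : CmBounded (M + 1) (pderivN i n g) := by
      apply ih (M + 1) g
      have : n + (M + 1) = n + 1 + M := by omega
      rwa [this]
    exact cmb_fderiv_apply (by rw [EuclideanSpace.norm_single]; simp) h1

lemma cmb_foldr {d : ℕ} (α : Fin d → ℕ) :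
    ∀ (l : List (Fin d)) (M : ℕ) (g : EuclideanSpace ℝ (Fin d) → ℝ),
      CmBounded ((l.map α).sum + M) g →
      CmBounded M (List.foldr (fun i h => pderivN i (α i) h) g l) := by
  intro l
  induction l with
  | nil => intro M g hg; simpa using hg
  | cons i l ih =>
    intro M g hg
    show CmBounded M (pderivN i (α i) (List.foldr (fun i h => pderivN i (α i) h) g l))
    apply cmb_pderivN i (α i) M
    apply ih (α i + M) g
    have : (l.map α).sum + (α i + M) = ((i :: l).map α).sum + M := by
      simp [List.map_cons, List.sum_cons]; omega
    rwa [this]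

lemma cmb_mderiv {d m : ℕ} (α : Fin d → ℕ) (hαm : ∑ i, α i = m)
    {g : EuclideanSpace ℝ (Fin d) → ℝ} (hg : CmBounded m g) :
    CmBounded 0 (mderiv α g) := by
  apply cmb_foldr α (List.finRange d) 0 g
  have : ((List.finRange d).map α).sum = m := by
    rw [← hαm, Fin.sum_univ_def]
  rw [this]
  simpa using hg

lemma cmb_zero_bound {d : ℕ} {f : EuclideanSpace ℝ (Fin d) → ℝ} (hf : CmBounded 0 f) :
    Continuous f ∧ ∃ B : ℝ, 0 ≤ B ∧ ∀ x, |f x| ≤ B := by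
  refine ⟨hf.1.continuous, ?_⟩
  obtain ⟨B, hB⟩ := hf.2 0 le_rfl
  refine ⟨B, le_trans (norm_nonneg _) (hB 0), fun x => ?_⟩
  have := hB x
  rwa [norm_iteratedFDeriv_zero, Real.norm_eq_abs] at this

lemma ulim_tendsto {U : Ultrafilter ℕ} {s : ℕ → ℝ} {M : ℝ} (h : ∀ n, |s n| ≤ M) :
    Tendsto s (U : Filter ℕ) (𝓝 (limUnder (U : Filter ℕ) s)) := by
  apply tendsto_nhds_limUnder
  have hc : IsCompact (Set.Icc (-M) M) := isCompact_Icc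
  have hle : (↑(U.map s) : Filter ℝ) ≤ Filter.principal (Set.Icc (-M) M) := by
    rw [Ultrafilter.coe_map, Filter.le_principal_iff, Filter.mem_map]
    have : ∀ n, s n ∈ Set.Icc (-M) M := fun n => abs_le.mp (h n)
    exact Filter.univ_mem' this
  obtain ⟨x, -, hx⟩ := hc.ultrafilter_le_nhds (U.map s) hle
  refine ⟨x, ?_⟩
  rw [Ultrafilter.coe_map] at hx
  exact hx
  
lemma key_holder {Ω : Type*} [MeasurableSpace Ω] (μ : Measure Ω) [IsProbabilityMeasure μ]
    {p q : ℝ} (hpq : q.HolderConjugate p) {f K : Ω → ℝ}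
    (hf : AEStronglyMeasurable f μ) {M : ℝ} (hfM : ∀ ω, |f ω| ≤ M)
    (hK : MemLp K (ENNReal.ofReal p) μ) {C : ℝ} (hC0 : 0 ≤ C)
    (hKC : eLpNorm K (ENNReal.ofReal p) μ ≤ ENNReal.ofReal C) :
    |∫ ω, f ω * K ω ∂μ| ≤ C * (∫ ω, |f ω| ^ q ∂μ) ^ (1 / q) := by
  have hp1 : 1 < p := hpq.symm.lt
  have hP1 : (1 : ENNReal) ≤ ENNReal.ofReal p := by
    rw [ENNReal.one_le_ofReal]; exact hp1.le
  have hfq : MemLp f (ENNReal.ofReal q) μ :=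
    MemLp.of_bound hf M (Eventually.of_forall fun ω => by
      rw [Real.norm_eq_abs]; exact hfM ω)
  have hint : Integrable (fun ω => f ω * K ω) μ :=
    (hK.integrable hP1).bdd_mul hf (Eventually.of_forall fun x => by rw [Real.norm_eq_abs]; exact hfM x)
  have h1 : |∫ ω, f ω * K ω ∂μ| ≤ ∫ ω, ‖f ω‖ * ‖K ω‖ ∂μ := by
    calc |∫ ω, f ω * K ω ∂μ| ≤ ∫ ω, ‖f ω * K ω‖ ∂μ := by
          rw [← Real.norm_eq_abs]; exact norm_integral_le_integral_norm _
      _ = ∫ ω, ‖f ω‖ * ‖K ω‖ ∂μ := by simp [norm_mul]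
  have h2 := integral_mul_norm_le_Lp_mul_Lq hpq hfq hK
  have hKp : (∫ ω, ‖K ω‖ ^ p ∂μ) ^ (1 / p) ≤ C := by
    have hppos : (0:ℝ) < p := hpq.symm.pos
    have := hK.eLpNorm_eq_integral_rpow_norm
      (by simpa [ENNReal.ofReal_eq_zero, not_le] using hppos) (by simp)
    rw [this, ENNReal.toReal_ofReal hpq.symm.nonneg] at hKC
    rw [ENNReal.ofReal_le_ofReal_iff hC0] at hKC
    rwa [one_div]
  have hfqnorm : ∫ ω, ‖f ω‖ ^ q ∂μ = ∫ ω, |f ω| ^ q ∂μ := by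
    simp [Real.norm_eq_abs]
  have hnn : 0 ≤ (∫ ω, ‖f ω‖ ^ q ∂μ) ^ (1 / q) :=
    Real.rpow_nonneg (integral_nonneg fun ω => Real.rpow_nonneg (norm_nonneg _) q) _
  calc |∫ ω, f ω * K ω ∂μ| ≤ (∫ ω, ‖f ω‖ ^ q ∂μ) ^ (1 / q) * (∫ ω, ‖K ω‖ ^ p ∂μ) ^ (1 / p) :=
        h1.trans h2
    _ ≤ (∫ ω, ‖f ω‖ ^ q ∂μ) ^ (1 / q) * C := by
        apply mul_le_mul_of_nonneg_left hKp hnn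
    _ = C * (∫ ω, |f ω| ^ q ∂μ) ^ (1 / q) := by rw [hfqnorm, mul_comm]

lemma int_abs_rpow_le {Ω : Type*} [MeasurableSpace Ω] (μ : Measure Ω) [IsProbabilityMeasure μ]
    {q : ℝ} (hq : 0 < q) {f : Ω → ℝ} (hf : AEStronglyMeasurable f μ)
    {M : ℝ} (hM : 0 ≤ M) (hfM : ∀ ω, |f ω| ≤ M) :
    (∫ ω, |f ω| ^ q ∂μ) ^ (1 / q) ≤ M := by
  have hmeas : AEStronglyMeasurable (fun ω => |f ω| ^ q) μ := by
    exact ((((Real.continuous_rpow_const hq.le).comp continuous_abs).measurable).comp_aemeasurable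
      hf.aemeasurable).aestronglyMeasurable
  have hb : ∀ ω, |f ω| ^ q ≤ M ^ q := fun ω =>
    Real.rpow_le_rpow (abs_nonneg _) (hfM ω) hq.le
  have hint : Integrable (fun ω => |f ω| ^ q) μ := by
    apply (MemLp.of_bound hmeas (M ^ q) (Eventually.of_forall fun ω => by
      rw [Real.norm_eq_abs, abs_of_nonneg (Real.rpow_nonneg (abs_nonneg _) q)]
      exact hb ω)).integrable le_rfl
  have h1 : ∫ ω, |f ω| ^ q ∂μ ≤ M ^ q := by
    calc ∫ ω, |f ω| ^ q ∂μ ≤ ∫ _, M ^ q ∂μ := integral_mono hint (integrable_const _) hb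
      _ = M ^ q := by simp
  calc (∫ ω, |f ω| ^ q ∂μ) ^ (1 / q) ≤ (M ^ q) ^ (1 / q) :=
        Real.rpow_le_rpow (integral_nonneg fun ω => Real.rpow_nonneg (abs_nonneg _) q) h1
          (by positivity)
    _ = M := by
        rw [← Real.rpow_mul hM, mul_one_div_cancel hq.ne', Real.rpow_one]

section Main
variable {Ω : Type*} [MeasurableSpace Ω] (μ : Measure Ω) [IsProbabilityMeasure μ]

lemma exists_W_nonneg (U : Ultrafilter ℕ) (p q : ℝ) (hpq : q.HolderConjugate p)
    (K : ℕ → Ω → ℝ) (hK : ∀ n, MemLp (K n) (ENNReal.ofReal p) μ) (hK0 : ∀ n ω, 0 ≤ K n ω)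
    (C : ℝ) (hC0 : 0 ≤ C) (hC : ∀ n, eLpNorm (K n) (ENNReal.ofReal p) μ ≤ ENNReal.ofReal C) :
    ∃ W : Ω → ℝ, Measurable W ∧ (∀ ω, 0 ≤ W ω) ∧ MemLp W (ENNReal.ofReal p) μ ∧
      ∀ f : Ω → ℝ, Measurable f → (∃ M : ℝ, ∀ ω, |f ω| ≤ M) →
        Tendsto (fun n => ∫ ω, f ω * K n ω ∂μ) (U : Filter ℕ) (𝓝 (∫ ω, f ω * W ω ∂μ)) := by
  have hp1 : 1 < p := hpq.symm.lt
  have hq0 : 0 < q := hpq.pos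
  have hq1 : 1 < q := hpq.lt
  have hP1 : (1 : ENNReal) ≤ ENNReal.ofReal p := by
    rw [ENNReal.one_le_ofReal]; exact hp1.le
  have hΩ : Nonempty Ω := by
    by_contra h
    rw [not_nonempty_iff] at h
    have h1 : μ Set.univ = 0 := by
      rw [Set.univ_eq_empty_iff.mpr h]; simp
    rw [measure_univ] at h1; exact one_ne_zero h1
  have hKint : ∀ n, Integrable (K n) μ := fun n => (hK n).integrable hP1
  have intKmul : ∀ {f : Ω → ℝ}, AEStronglyMeasurable f μ → (∃ M : ℝ, ∀ ω, |f ω| ≤ M) →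
      ∀ n, Integrable (fun ω => f ω * K n ω) μ := by
    rintro f hf ⟨M, hM⟩ n
    exact (hKint n).bdd_mul hf (Eventually.of_forall fun x => by rw [Real.norm_eq_abs]; exact hM x)
  -- the uniform bound on the integrals
  have hIb : ∀ {f : Ω → ℝ} {M : ℝ}, Measurable f → (∀ ω, |f ω| ≤ M) →
      ∀ n, |∫ ω, f ω * K n ω ∂μ| ≤ C * M := by
    intro f M hf hM n
    have hM0 : 0 ≤ M := le_trans (abs_nonneg _) (hM (Classical.arbitrary Ω))
    calc |∫ ω, f ω * K n ω ∂μ| ≤ C * (∫ ω, |f ω| ^ q ∂μ) ^ (1 / q) :=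
          key_holder μ hpq hf.aestronglyMeasurable hM (hK n) hC0 (hC n)
      _ ≤ C * M := mul_le_mul_of_nonneg_left
          (int_abs_rpow_le μ hq0 hf.aestronglyMeasurable hM0 hM) hC0
  have tendI : ∀ {f : Ω → ℝ} {M : ℝ}, Measurable f → (∀ ω, |f ω| ≤ M) →
      Tendsto (fun n => ∫ ω, f ω * K n ω ∂μ) (U : Filter ℕ)
        (𝓝 (limUnder (U : Filter ℕ) (fun n => ∫ ω, f ω * K n ω ∂μ))) := by
    intro f M hf hM
    exact ulim_tendsto (fun n => hIb hf hM n)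
  -- indicators
  set ind : Set Ω → Ω → ℝ := fun A => A.indicator (fun _ => (1:ℝ)) with hind_def
  have hind_meas : ∀ {A : Set Ω}, MeasurableSet A → Measurable (ind A) :=
    fun hA => measurable_const.indicator hA
  have hind_cases : ∀ A ω, ind A ω = 1 ∧ ω ∈ A ∨ ind A ω = 0 ∧ ω ∉ A := by
    intro A ω
    by_cases hω : ω ∈ A
    · exact Or.inl ⟨Set.indicator_of_mem hω _, hω⟩
    · exact Or.inr ⟨Set.indicator_of_notMem hω _, hω⟩
  have hind_bd : ∀ A ω, |ind A ω| ≤ 1 := by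
    intro A ω
    rcases hind_cases A ω with ⟨h, -⟩ | ⟨h, -⟩ <;> rw [h] <;> simp
  have hind_nonneg : ∀ A ω, 0 ≤ ind A ω := by
    intro A ω
    rcases hind_cases A ω with ⟨h, -⟩ | ⟨h, -⟩ <;> rw [h] <;> simp
  have hind_int_eq : ∀ {A : Set Ω}, MeasurableSet A → ∀ (F : Ω → ℝ),
      ∫ ω, ind A ω * F ω ∂μ = ∫ ω in A, F ω ∂μ := by
    intro A hA F
    rw [← integral_indicator hA]
    congr 1
    funext ω
    rcases hind_cases A ω with ⟨h, hω⟩ | ⟨h, hω⟩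
    · rw [h, Set.indicator_of_mem hω, one_mul]
    · rw [h, Set.indicator_of_notMem hω, zero_mul]
  -- the limit set function
  set ν : Set Ω → ℝ := fun A => limUnder (U : Filter ℕ) (fun n => ∫ ω, ind A ω * K n ω ∂μ)
    with hν_def
  have tendν : ∀ {A : Set Ω}, MeasurableSet A →
      Tendsto (fun n => ∫ ω, ind A ω * K n ω ∂μ) (U : Filter ℕ) (𝓝 (ν A)) := by
    intro A hA
    exact tendI (hind_meas hA) (hind_bd A)
  have ν_nonneg : ∀ {A : Set Ω}, MeasurableSet A → 0 ≤ ν A := by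
    intro A hA
    refine ge_of_tendsto (tendν hA) (Eventually.of_forall fun n => ?_)
    exact integral_nonneg fun ω => mul_nonneg (hind_nonneg A ω) (hK0 n ω)
  have ν_le : ∀ {A : Set Ω}, MeasurableSet A → ν A ≤ C * ((μ A).toReal) ^ (1 / q) := by
    intro A hA
    refine le_of_tendsto (tendν hA) (Eventually.of_forall fun n => ?_)
    have h1 : ∫ ω, |ind A ω| ^ q ∂μ = (μ A).toReal := by
      have h2 : ∀ ω, |ind A ω| ^ q = ind A ω := by
        intro ω
        rcases hind_cases A ω with ⟨h, -⟩ | ⟨h, -⟩ <;> rw [h]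
        · simp
        · simp [Real.zero_rpow hq0.ne']
      rw [show (fun ω => |ind A ω| ^ q) = ind A from funext h2]
      simpa [hind_def, Pi.one_def, measureReal_def] using integral_indicator_one (μ := μ) hA
    calc ∫ ω, ind A ω * K n ω ∂μ ≤ |∫ ω, ind A ω * K n ω ∂μ| := le_abs_self _
      _ ≤ C * (∫ ω, |ind A ω| ^ q ∂μ) ^ (1 / q) :=
          key_holder μ hpq (hind_meas hA).aestronglyMeasurable (hind_bd A) (hK n) hC0 (hC n)
      _ = C * ((μ A).toReal) ^ (1 / q) := by rw [h1]
  have ν_empty : ν ∅ = 0 := by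
    refine tendsto_nhds_unique (tendν MeasurableSet.empty) ?_
    have : ∀ n, ∫ ω, ind ∅ ω * K n ω ∂μ = 0 := by
      intro n
      have : ∀ ω, ind (∅ : Set Ω) ω * K n ω = 0 := by
        intro ω
        rcases hind_cases ∅ ω with ⟨-, hω⟩ | ⟨h, -⟩
        · exact absurd hω (Set.notMem_empty ω)
        · rw [h, zero_mul]
      simp only [this, integral_zero]
    simp only [this]
    exact tendsto_const_nhds
  have ν_union : ∀ {A B : Set Ω}, MeasurableSet A → MeasurableSet B → Disjoint A B →
      ν (A ∪ B) = ν A + ν B := by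
    intro A B hA hB hAB
    have e : ∀ n, ∫ ω, ind (A ∪ B) ω * K n ω ∂μ
        = ∫ ω, ind A ω * K n ω ∂μ + ∫ ω, ind B ω * K n ω ∂μ := by
      intro n
      rw [← integral_add (intKmul (hind_meas hA).aestronglyMeasurable ⟨1, hind_bd A⟩ n)
        (intKmul (hind_meas hB).aestronglyMeasurable ⟨1, hind_bd B⟩ n)]
      congr 1
      funext ω
      have : ind (A ∪ B) ω = ind A ω + ind B ω := by
        simp only [hind_def]
        rw [Set.indicator_union_of_disjoint hAB]
      rw [this, add_mul]
    refine tendsto_nhds_unique ?_ ((tendν hA).add (tendν hB))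
    have : (fun n => ∫ ω, ind A ω * K n ω ∂μ + ∫ ω, ind B ω * K n ω ∂μ)
        = fun n => ∫ ω, ind (A ∪ B) ω * K n ω ∂μ := by
      funext n; rw [e n]
    rw [this]
    exact tendν (hA.union hB)
  -- countable additivity
  have ν_countable : ∀ (A : ℕ → Set Ω), (∀ i, MeasurableSet (A i)) →
      Pairwise (Function.onFun Disjoint A) →
      ENNReal.ofReal (ν (⋃ i, A i)) = ∑' i, ENNReal.ofReal (ν (A i)) := by
    intro A hA hd
    set Uk : ℕ → Set Ω := fun k => ⋃ i ∈ Finset.range k, A i with hUk_def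
    have hUk_meas : ∀ k, MeasurableSet (Uk k) := fun k =>
      Finset.measurableSet_biUnion _ (fun i _ => hA i)
    have hUk_succ : ∀ k, Uk (k + 1) = Uk k ∪ A k := by
      intro k
      simp only [hUk_def, Finset.range_add_one, Finset.set_biUnion_insert]
      rw [Set.union_comm]
    have hUk_disj : ∀ k, Disjoint (Uk k) (A k) := by
      intro k
      refine Set.disjoint_left.mpr fun ω hω hωk => ?_
      simp only [hUk_def, Set.mem_iUnion] at hω
      obtain ⟨i, hi, hωi⟩ := hω
      have : i ≠ k := fun h => by
        rw [h] at hi; exact absurd hi (by simp)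
      exact Set.disjoint_left.mp (hd this) hωi hωk
    have hν_Uk : ∀ k, ν (Uk k) = ∑ i ∈ Finset.range k, ν (A i) := by
      intro k
      induction k with
      | zero => simpa [hUk_def] using ν_empty
      | succ k ih =>
          rw [hUk_succ k, ν_union (hUk_meas k) (hA k) (hUk_disj k), ih,
            Finset.sum_range_succ]
    set tail : ℕ → Set Ω := fun k => ⋃ i, A (i + k) with htail_def
    have htail_meas : ∀ k, MeasurableSet (tail k) := fun k =>
      MeasurableSet.iUnion (fun i => hA (i + k))
    have hsplit : ∀ k, (⋃ i, A i) = Uk k ∪ tail k := by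
      intro k
      ext ω
      simp only [hUk_def, htail_def, Set.mem_union, Set.mem_iUnion, Finset.mem_range]
      constructor
      · rintro ⟨i, hωi⟩
        rcases lt_or_ge i k with h | h
        · exact Or.inl ⟨i, h, hωi⟩
        · exact Or.inr ⟨i - k, by rwa [Nat.sub_add_cancel h]⟩
      · rintro (⟨i, -, hωi⟩ | ⟨i, hωi⟩)
        · exact ⟨i, hωi⟩
        · exact ⟨i + k, hωi⟩
    have hdisj_Uk_tail : ∀ k, Disjoint (Uk k) (tail k) := by
      intro k
      refine Set.disjoint_left.mpr fun ω hω hωt => ?_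
      simp only [hUk_def, Set.mem_iUnion, Finset.mem_range] at hω
      simp only [htail_def, Set.mem_iUnion] at hωt
      obtain ⟨i, hi, hωi⟩ := hω
      obtain ⟨j, hωj⟩ := hωt
      have : i ≠ j + k := by omega
      exact Set.disjoint_left.mp (hd this) hωi hωj
    have hν_split : ∀ k, ν (⋃ i, A i) = ∑ i ∈ Finset.range k, ν (A i) + ν (tail k) := by
      intro k
      rw [hsplit k, ν_union (hUk_meas k) (htail_meas k) (hdisj_Uk_tail k), hν_Uk k]
    -- the tail measure tends to zero
    have hμtail : Tendsto (fun k => μ (tail k)) atTop (𝓝 0) := by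
      have hne : ∑' i, μ (A i) ≠ ⊤ := by
        rw [← measure_iUnion hd hA]
        exact (measure_lt_top μ _).ne
      have h1 := ENNReal.tendsto_sum_nat_add (fun i => μ (A i)) hne
      refine tendsto_of_tendsto_of_tendsto_of_le_of_le tendsto_const_nhds h1
        (fun k => zero_le) (fun k => ?_)
      calc μ (tail k) ≤ ∑' i, μ (A (i + k)) := measure_iUnion_le _
        _ = ∑' i, μ (A (i + k)) := rfl
    have hμtailR : Tendsto (fun k => (μ (tail k)).toReal) atTop (𝓝 0) := by
      have := (ENNReal.tendsto_toReal (by simp : (0:ENNReal) ≠ ⊤)).comp hμtail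
      exact this
    have htail0 : Tendsto (fun k => ν (tail k)) atTop (𝓝 0) := by
      have hrpow : Tendsto (fun k => C * ((μ (tail k)).toReal) ^ (1 / q)) atTop (𝓝 0) := by
        have h2 : Tendsto (fun k => ((μ (tail k)).toReal) ^ (1 / q)) atTop (𝓝 ((0:ℝ) ^ (1 / q))) :=
          ((Real.continuousAt_rpow_const 0 (1 / q) (Or.inr (by positivity))).tendsto).comp hμtailR
        rw [Real.zero_rpow (by positivity : (1:ℝ) / q ≠ 0)] at h2
        simpa using h2.const_mul C
      refine tendsto_of_tendsto_of_tendsto_of_le_of_le tendsto_const_nhds hrpow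
        (fun k => ν_nonneg (htail_meas k)) (fun k => ν_le (htail_meas k))
    have hpartial : Tendsto (fun k => ∑ i ∈ Finset.range k, ν (A i)) atTop (𝓝 (ν (⋃ i, A i))) := by
      have : (fun k => ∑ i ∈ Finset.range k, ν (A i))
          = fun k => ν (⋃ i, A i) - ν (tail k) := by
        funext k
        rw [hν_split k]; ring
      rw [this]
      have := tendsto_const_nhds (x := ν (⋃ i, A i)) (f := atTop (α := ℕ)) |>.sub htail0
      simpa using this
    -- move to ENNReal
    have hpartialE : Tendsto (fun k => ∑ i ∈ Finset.range k, ENNReal.ofReal (ν (A i))) atTop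
        (𝓝 (ENNReal.ofReal (ν (⋃ i, A i)))) := by
      have he : ∀ k, ∑ i ∈ Finset.range k, ENNReal.ofReal (ν (A i))
          = ENNReal.ofReal (∑ i ∈ Finset.range k, ν (A i)) := by
        intro k
        rw [ENNReal.ofReal_sum_of_nonneg (fun i _ => ν_nonneg (hA i))]
      simp only [he]
      exact (ENNReal.continuous_ofReal.tendsto _).comp hpartial
    exact tendsto_nhds_unique hpartialE (ENNReal.tendsto_nat_tsum _)
  -- construct the measure
  set νM : Measure Ω := Measure.ofMeasurable (fun A _ => ENNReal.ofReal (ν A))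
    (by show ENNReal.ofReal (ν ∅) = 0
        rw [ν_empty]; simp)
    (fun A hA hd => by
        show ENNReal.ofReal (ν (⋃ i, A i)) = ∑' i, ENNReal.ofReal (ν (A i))
        exact ν_countable A hA hd) with hνM_def
  have νM_apply : ∀ {A : Set Ω}, MeasurableSet A → νM A = ENNReal.ofReal (ν A) := by
    intro A hA
    exact Measure.ofMeasurable_apply A hA
  haveI : IsFiniteMeasure νM := by
    constructor
    rw [νM_apply MeasurableSet.univ]
    exact ENNReal.ofReal_lt_top
  have hac : νM ≪ μ := by
    refine Measure.AbsolutelyContinuous.mk fun A hA h0 => ?_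
    rw [νM_apply hA]
    have h1 := ν_le hA
    rw [h0] at h1
    simp only [ENNReal.toReal_zero, Real.zero_rpow (by positivity : (1:ℝ)/q ≠ 0), mul_zero] at h1
    rw [ENNReal.ofReal_eq_zero]
    exact h1
  set W : Ω → ℝ := fun ω => (νM.rnDeriv μ ω).toReal with hW_def
  have hWmeas : Measurable W := ENNReal.measurable_toReal.comp (Measure.measurable_rnDeriv νM μ)
  have hW0 : ∀ ω, 0 ≤ W ω := fun ω => ENNReal.toReal_nonneg
  have hWint : Integrable W μ := Measure.integrable_toReal_rnDeriv
  have intWmul : ∀ {f : Ω → ℝ}, AEStronglyMeasurable f μ → (∃ M : ℝ, ∀ ω, |f ω| ≤ M) →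
      Integrable (fun ω => f ω * W ω) μ := by
    rintro f hf ⟨M, hM⟩
    exact hWint.bdd_mul hf (Eventually.of_forall fun x => by rw [Real.norm_eq_abs]; exact hM x)
  have hWset : ∀ {A : Set Ω}, MeasurableSet A → ∫ ω in A, W ω ∂μ = ν A := by
    intro A hA
    rw [hW_def]
    rw [Measure.setIntegral_toReal_rnDeriv hac A, measureReal_def, νM_apply hA,
      ENNReal.toReal_ofReal (ν_nonneg hA)]
  have IND : ∀ {A : Set Ω}, MeasurableSet A →
      Tendsto (fun n => ∫ ω, ind A ω * K n ω ∂μ) (U : Filter ℕ)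
        (𝓝 (∫ ω, ind A ω * W ω ∂μ)) := by
    intro A hA
    rw [hind_int_eq hA W, hWset hA]
    exact tendν hA
  have SIM : ∀ φ : SimpleFunc Ω ℝ,
      Tendsto (fun n => ∫ ω, φ ω * K n ω ∂μ) (U : Filter ℕ)
        (𝓝 (∫ ω, φ ω * W ω ∂μ)) := by
    intro φ
    induction φ using SimpleFunc.induction with
    | @const c s hs =>
        have hcoe : ∀ ω, (SimpleFunc.piecewise s hs (SimpleFunc.const Ω c)
            (SimpleFunc.const Ω 0)) ω = c * ind s ω := by
          intro ω
          rw [SimpleFunc.piecewise_apply]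
          rcases hind_cases s ω with ⟨h, hω⟩ | ⟨h, hω⟩
          · rw [h, if_pos hω]; simp
          · rw [h, if_neg hω]; simp
        have e1 : ∀ n, ∫ ω, (SimpleFunc.piecewise s hs (SimpleFunc.const Ω c)
            (SimpleFunc.const Ω 0)) ω * K n ω ∂μ = c * ∫ ω, ind s ω * K n ω ∂μ := by
          intro n
          rw [← integral_const_mul]
          congr 1
          funext ω
          rw [hcoe ω, mul_assoc]
        have e2 : ∫ ω, (SimpleFunc.piecewise s hs (SimpleFunc.const Ω c)
            (SimpleFunc.const Ω 0)) ω * W ω ∂μ = c * ∫ ω, ind s ω * W ω ∂μ := by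
          rw [← integral_const_mul]
          congr 1
          funext ω
          rw [hcoe ω, mul_assoc]
        simp only [e1, e2]
        exact (IND hs).const_mul c
    | @add φ ψ hdisj hφ hψ =>
        obtain ⟨Mφ, hMφ⟩ := φ.exists_forall_norm_le
        obtain ⟨Mψ, hMψ⟩ := ψ.exists_forall_norm_le
        have hφm : Measurable φ := φ.measurable
        have hψm : Measurable ψ := ψ.measurable
        have hφb : ∃ M : ℝ, ∀ ω, |φ ω| ≤ M := ⟨Mφ, fun ω => by
          rw [← Real.norm_eq_abs]; exact hMφ ω⟩
        have hψb : ∃ M : ℝ, ∀ ω, |ψ ω| ≤ M := ⟨Mψ, fun ω => by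
          rw [← Real.norm_eq_abs]; exact hMψ ω⟩
        have e1 : ∀ n, ∫ ω, (φ + ψ) ω * K n ω ∂μ
            = ∫ ω, φ ω * K n ω ∂μ + ∫ ω, ψ ω * K n ω ∂μ := by
          intro n
          rw [← integral_add (intKmul hφm.aestronglyMeasurable hφb n)
            (intKmul hψm.aestronglyMeasurable hψb n)]
          congr 1
          funext ω
          simp only [SimpleFunc.coe_add, Pi.add_apply]
          ring
        have e2 : ∫ ω, (φ + ψ) ω * W ω ∂μ
            = ∫ ω, φ ω * W ω ∂μ + ∫ ω, ψ ω * W ω ∂μ := by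
          rw [← integral_add (intWmul hφm.aestronglyMeasurable hφb)
            (intWmul hψm.aestronglyMeasurable hψb)]
          congr 1
          funext ω
          simp only [SimpleFunc.coe_add, Pi.add_apply]
          ring
        simp only [e1, e2]
        exact hφ.add hψ
  -- extension to bounded measurable functions
  have EXT : ∀ (f : Ω → ℝ), Measurable f → ∀ M : ℝ, (∀ ω, |f ω| ≤ M) →
      Tendsto (fun n => ∫ ω, f ω * K n ω ∂μ) (U : Filter ℕ) (𝓝 (∫ ω, f ω * W ω ∂μ)) := by
    intro f hfm M hfM
    have hM0 : 0 ≤ M := le_trans (abs_nonneg _) (hfM (Classical.arbitrary Ω))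
    set φ : ℕ → SimpleFunc Ω ℝ := fun k =>
      SimpleFunc.approxOn f hfm Set.univ 0 (Set.mem_univ 0) k with hφ_def
    have hφlim : ∀ ω, Tendsto (fun k => φ k ω) atTop (𝓝 (f ω)) := by
      intro ω
      apply SimpleFunc.tendsto_approxOn hfm (Set.mem_univ 0)
      simp
    have hφbd : ∀ k ω, |(φ k) ω| ≤ 2 * M := by
      intro k ω
      have h1 := SimpleFunc.norm_approxOn_zero_le hfm (Set.mem_univ 0) ω k
      rw [Real.norm_eq_abs] at h1
      calc |(φ k) ω| ≤ ‖f ω‖ + ‖f ω‖ := h1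
        _ ≤ M + M := by rw [Real.norm_eq_abs]; exact add_le_add (hfM ω) (hfM ω)
        _ = 2 * M := by ring
    have hdiffbd : ∀ k ω, |(φ k) ω - f ω| ≤ 3 * M := by
      intro k ω
      calc |(φ k) ω - f ω| ≤ |(φ k) ω| + |f ω| := abs_sub _ _
        _ ≤ 2 * M + M := add_le_add (hφbd k ω) (hfM ω)
        _ = 3 * M := by ring
    have hdiff_meas : ∀ k, Measurable (fun ω => (φ k) ω - f ω) := fun k =>
      (φ k).measurable.sub hfm
    set dd : ℕ → ℝ := fun k => ∫ ω, |(φ k) ω - f ω| ^ q ∂μ with hdd_def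
    have hd_meas : ∀ k, AEStronglyMeasurable (fun ω => |(φ k) ω - f ω| ^ q) μ := by
      intro k
      exact ((((Real.continuous_rpow_const hq0.le).comp continuous_abs).measurable).comp
        (hdiff_meas k)).aestronglyMeasurable
    have hdk : Tendsto dd atTop (𝓝 0) := by
      have h0 : (0:ℝ) = ∫ (_ : Ω), (0:ℝ) ∂μ := by simp
      rw [hdd_def, h0]
      apply tendsto_integral_of_dominated_convergence (fun _ => (3 * M) ^ q) hd_meas
        (integrable_const _)
      · intro k
        refine Eventually.of_forall fun ω => ?_
        rw [Real.norm_eq_abs, abs_of_nonneg (Real.rpow_nonneg (abs_nonneg _) q)]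
        exact Real.rpow_le_rpow (abs_nonneg _) (hdiffbd k ω) hq0.le
      · refine Eventually.of_forall fun ω => ?_
        have h1 : Tendsto (fun k => |(φ k) ω - f ω|) atTop (𝓝 0) := by
          have := ((hφlim ω).sub (tendsto_const_nhds (x := f ω))).abs
          simpa using this
        have h2 := ((Real.continuousAt_rpow_const 0 q (Or.inr hq0.le)).tendsto).comp h1
        rwa [Real.zero_rpow hq0.ne'] at h2
    have hstep : ∀ k n, |∫ ω, (φ k) ω * K n ω ∂μ - ∫ ω, f ω * K n ω ∂μ|
        ≤ C * (dd k) ^ (1 / q) := by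
      intro k n
      obtain ⟨Mφ, hMφ⟩ := (φ k).exists_forall_norm_le
      rw [← integral_sub (intKmul (φ k).measurable.aestronglyMeasurable
        ⟨Mφ, fun ω => by rw [← Real.norm_eq_abs]; exact hMφ ω⟩ n)
        (intKmul hfm.aestronglyMeasurable ⟨M, hfM⟩ n)]
      have : ∀ ω, (φ k) ω * K n ω - f ω * K n ω = ((φ k) ω - f ω) * K n ω := by
        intro ω; ring
      simp only [this]
      exact key_holder μ hpq (hdiff_meas k).aestronglyMeasurable (hdiffbd k) (hK n) hC0 (hC n)
    set Tf : ℝ := limUnder (U : Filter ℕ) (fun n => ∫ ω, f ω * K n ω ∂μ) with hTf_def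
    have hTf : Tendsto (fun n => ∫ ω, f ω * K n ω ∂μ) (U : Filter ℕ) (𝓝 Tf) :=
      tendI hfm hfM
    have hdiffT : ∀ k, |∫ ω, (φ k) ω * W ω ∂μ - Tf| ≤ C * (dd k) ^ (1 / q) := by
      intro k
      refine le_of_tendsto ((SIM (φ k)).sub hTf).abs (Eventually.of_forall fun n => ?_)
      exact hstep k n
    have hk1 : Tendsto (fun k => ∫ ω, (φ k) ω * W ω ∂μ) atTop (𝓝 (∫ ω, f ω * W ω ∂μ)) := by
      apply tendsto_integral_of_dominated_convergence (fun ω => 2 * M * |W ω|)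
      · intro k
        exact ((φ k).measurable.mul hWmeas).aestronglyMeasurable
      · exact (hWint.abs.const_mul (2 * M))
      · intro k
        refine Eventually.of_forall fun ω => ?_
        rw [Real.norm_eq_abs, abs_mul]
        exact mul_le_mul_of_nonneg_right (hφbd k ω) (abs_nonneg _)
      · refine Eventually.of_forall fun ω => ?_
        exact (hφlim ω).mul_const (W ω)
    have hrhs : Tendsto (fun k => C * (dd k) ^ (1 / q)) atTop (𝓝 0) := by
      have h2 : Tendsto (fun k => (dd k) ^ (1 / q)) atTop (𝓝 ((0:ℝ) ^ (1 / q))) :=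
        ((Real.continuousAt_rpow_const 0 (1 / q) (Or.inr (by positivity))).tendsto).comp hdk
      rw [Real.zero_rpow (by positivity : (1:ℝ)/q ≠ 0)] at h2
      simpa using h2.const_mul C
    have hk2 : Tendsto (fun k => ∫ ω, (φ k) ω * W ω ∂μ) atTop (𝓝 Tf) := by
      have h1 : Tendsto (fun k => ∫ ω, (φ k) ω * W ω ∂μ - Tf) atTop (𝓝 0) := by
        apply squeeze_zero_norm (fun k => ?_) hrhs
        rw [Real.norm_eq_abs]
        exact hdiffT k
      have := h1.add (tendsto_const_nhds (x := Tf))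
      simpa using this
    have heq : ∫ ω, f ω * W ω ∂μ = Tf := tendsto_nhds_unique hk1 hk2
    rw [heq]
    exact hTf
  -- the Lp bound on W
  have hpm1 : 0 < p - 1 := hpq.symm.sub_one_pos
  have hp0 : 0 < p := hpq.symm.pos
  have MEM : MemLp W (ENNReal.ofReal p) μ := by
    have hmin_meas : ∀ j : ℕ, Measurable (fun ω => min (W ω) (j:ℝ)) := fun j =>
      hWmeas.min measurable_const
    have hmin_nonneg : ∀ (j : ℕ) ω, 0 ≤ min (W ω) (j:ℝ) := fun j ω =>
      le_min (hW0 ω) (by positivity)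
    set fj : ℕ → Ω → ℝ := fun j ω => (min (W ω) (j:ℝ)) ^ (p - 1) with hfj_def
    have hfj_meas : ∀ j, Measurable (fj j) := fun j =>
      ((Real.continuous_rpow_const hpm1.le).measurable).comp (hmin_meas j)
    have hfj_nonneg : ∀ j ω, 0 ≤ fj j ω := fun j ω =>
      Real.rpow_nonneg (hmin_nonneg j ω) _
    have hfj_bd : ∀ j ω, |fj j ω| ≤ (j:ℝ) ^ (p - 1) := by
      intro j ω
      rw [abs_of_nonneg (hfj_nonneg j ω)]
      exact Real.rpow_le_rpow (hmin_nonneg j ω) (min_le_right _ _) hpm1.le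
    set J : ℕ → ℝ := fun j => ∫ ω, (min (W ω) (j:ℝ)) ^ p ∂μ with hJ_def
    have hminp_meas : ∀ j : ℕ, Measurable (fun ω => (min (W ω) (j:ℝ)) ^ p) := fun j =>
      ((Real.continuous_rpow_const hp0.le).measurable).comp (hmin_meas j)
    have hminp_bd : ∀ (j : ℕ) ω, |(min (W ω) (j:ℝ)) ^ p| ≤ (j:ℝ) ^ p := by
      intro j ω
      rw [abs_of_nonneg (Real.rpow_nonneg (hmin_nonneg j ω) _)]
      exact Real.rpow_le_rpow (hmin_nonneg j ω) (min_le_right _ _) hp0.le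
    have hminp_int : ∀ j : ℕ, Integrable (fun ω => (min (W ω) (j:ℝ)) ^ p) μ := by
      intro j
      refine (MemLp.of_bound (hminp_meas j).aestronglyMeasurable ((j:ℝ) ^ p)
        (Eventually.of_forall fun ω => ?_)).integrable le_rfl
      rw [Real.norm_eq_abs]; exact hminp_bd j ω
    have hJ_nonneg : ∀ j, 0 ≤ J j := fun j =>
      integral_nonneg fun ω => Real.rpow_nonneg (hmin_nonneg j ω) _
    have hq_int : ∀ j, ∫ ω, |fj j ω| ^ q ∂μ = J j := by
      intro j
      rw [hJ_def]
      congr 1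
      funext ω
      rw [abs_of_nonneg (hfj_nonneg j ω)]
      show ((min (W ω) (j:ℝ)) ^ (p - 1)) ^ q = (min (W ω) (j:ℝ)) ^ p
      rw [← Real.rpow_mul (hmin_nonneg j ω), hpq.symm.sub_one_mul_conj]
    have hIfj : ∀ j, |∫ ω, fj j ω * W ω ∂μ| ≤ C * (J j) ^ (1 / q) := by
      intro j
      refine le_of_tendsto (EXT (fj j) (hfj_meas j) ((j:ℝ) ^ (p-1)) (hfj_bd j)).abs
        (Eventually.of_forall fun n => ?_)
      have := key_holder μ hpq (hfj_meas j).aestronglyMeasurable (hfj_bd j) (hK n) hC0 (hC n)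
      rwa [hq_int j] at this
    have hJle : ∀ j, J j ≤ ∫ ω, fj j ω * W ω ∂μ := by
      intro j
      refine integral_mono (hminp_int j)
        (intWmul (hfj_meas j).aestronglyMeasurable ⟨(j:ℝ) ^ (p-1), hfj_bd j⟩) fun ω => ?_
      rcases eq_or_lt_of_le (hmin_nonneg j ω) with h0 | hpos
      · rw [← h0, Real.zero_rpow hp0.ne']
        exact mul_nonneg (hfj_nonneg j ω) (hW0 ω)
      · have h1 : (min (W ω) (j:ℝ)) ^ p = (min (W ω) (j:ℝ)) ^ (p - 1) * min (W ω) (j:ℝ) := by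
          rw [← Real.rpow_add_one hpos.ne']
          ring_nf
        rw [h1, hfj_def]
        exact mul_le_mul_of_nonneg_left (min_le_left _ _) (Real.rpow_nonneg (hmin_nonneg j ω) _)
    have hJC : ∀ j, J j ≤ C * (J j) ^ (1 / q) := fun j =>
      (hJle j).trans ((le_abs_self _).trans (hIfj j))
    have hJp : ∀ j, (J j) ^ (1 / p) ≤ C := by
      intro j
      rcases eq_or_lt_of_le (hJ_nonneg j) with h0 | hpos
      · rw [← h0, Real.zero_rpow (by positivity : (1:ℝ)/p ≠ 0)]
        exact hC0
      · have h1 : (J j) ^ (1 / q) * (J j) ^ (1 / p) ≤ (J j) ^ (1 / q) * C := by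
          rw [← Real.rpow_add hpos]
          have h2 : 1 / q + 1 / p = 1 := by
            rw [one_div, one_div]
            exact hpq.inv_add_inv_eq_one
          rw [h2, Real.rpow_one, mul_comm ((J j) ^ (1/q)) C]
          exact hJC j
        exact le_of_mul_le_mul_left h1 (Real.rpow_pos_of_pos hpos _)
    have hJCp : ∀ j, J j ≤ C ^ p := by
      intro j
      have h1 : ((J j) ^ (1 / p)) ^ p = J j := by
        rw [← Real.rpow_mul (hJ_nonneg j), one_div_mul_cancel hp0.ne', Real.rpow_one]
      calc J j = ((J j) ^ (1 / p)) ^ p := h1.symm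
        _ ≤ C ^ p := Real.rpow_le_rpow (Real.rpow_nonneg (hJ_nonneg j) _) (hJp j) hp0.le
    -- monotone convergence
    have hptwise : ∀ ω, ‖W ω‖ₑ ^ p = ⨆ j : ℕ, ENNReal.ofReal ((min (W ω) (j:ℝ)) ^ p) := by
      intro ω
      rw [Real.enorm_eq_ofReal (hW0 ω), ENNReal.ofReal_rpow_of_nonneg (hW0 ω) hp0.le]
      refine le_antisymm ?_ ?_
      · have hj : W ω = min (W ω) ((⌈W ω⌉₊ : ℕ) : ℝ) := by
          rw [min_eq_left (Nat.le_ceil _)]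
        calc ENNReal.ofReal (W ω ^ p)
            = ENNReal.ofReal ((min (W ω) ((⌈W ω⌉₊ : ℕ) : ℝ)) ^ p) := by rw [← hj]
          _ ≤ ⨆ j : ℕ, ENNReal.ofReal ((min (W ω) (j:ℝ)) ^ p) :=
              le_iSup (fun j : ℕ => ENNReal.ofReal ((min (W ω) (j:ℝ)) ^ p)) ⌈W ω⌉₊
      · refine iSup_le fun j => ?_
        apply ENNReal.ofReal_le_ofReal
        exact Real.rpow_le_rpow (hmin_nonneg j ω) (min_le_left _ _) hp0.le
    have hmono : Monotone (fun j : ℕ => fun ω => ENNReal.ofReal ((min (W ω) (j:ℝ)) ^ p)) := by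
      intro a b hab ω
      apply ENNReal.ofReal_le_ofReal
      exact Real.rpow_le_rpow (hmin_nonneg a ω)
        (min_le_min le_rfl (Nat.cast_le.mpr hab)) hp0.le
    have hlint : ∫⁻ ω, ‖W ω‖ₑ ^ p ∂μ ≤ ENNReal.ofReal (C ^ p) := by
      have h1 : ∫⁻ ω, ‖W ω‖ₑ ^ p ∂μ
          = ⨆ j : ℕ, ∫⁻ ω, ENNReal.ofReal ((min (W ω) (j:ℝ)) ^ p) ∂μ := by
        rw [← lintegral_iSup (fun j => (hminp_meas j).ennreal_ofReal) hmono]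
        exact lintegral_congr fun ω => hptwise ω
      rw [h1]
      refine iSup_le fun j => ?_
      have h2 : ∫⁻ ω, ENNReal.ofReal ((min (W ω) (j:ℝ)) ^ p) ∂μ = ENNReal.ofReal (J j) :=
        (ofReal_integral_eq_lintegral_ofReal (hminp_int j)
          (Eventually.of_forall fun ω => Real.rpow_nonneg (hmin_nonneg j ω) _)).symm
      rw [h2]
      exact ENNReal.ofReal_le_ofReal (hJCp j)
    have help : eLpNorm W (ENNReal.ofReal p) μ ≤ ENNReal.ofReal C := by
      rw [eLpNorm_eq_lintegral_rpow_enorm_toReal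
        (by rw [Ne, ENNReal.ofReal_eq_zero, not_le]; exact hp0) (by simp),
        ENNReal.toReal_ofReal hp0.le]
      calc (∫⁻ ω, ‖W ω‖ₑ ^ p ∂μ) ^ (1/p)
          ≤ (ENNReal.ofReal (C ^ p)) ^ (1/p) := ENNReal.rpow_le_rpow hlint (by positivity)
        _ = ENNReal.ofReal C := by
            rw [ENNReal.ofReal_rpow_of_nonneg (by positivity) (by positivity),
              ← Real.rpow_mul hC0, mul_one_div_cancel hp0.ne', Real.rpow_one]
    exact ⟨hWmeas.aestronglyMeasurable, lt_of_le_of_lt help ENNReal.ofReal_lt_top⟩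
  exact ⟨W, hWmeas, hW0, MEM, fun f hf hM => by
    obtain ⟨M, hM⟩ := hM
    exact EXT f hf M hM⟩

lemma exists_H_signed (p q : ℝ) (hpq : q.HolderConjugate p)
    (L : ℕ → Ω → ℝ) (hL : ∀ n, MemLp (L n) (ENNReal.ofReal p) μ)
    (C : ℝ) (hC0 : 0 ≤ C) (hC : ∀ n, eLpNorm (L n) (ENNReal.ofReal p) μ ≤ ENNReal.ofReal C) :
    ∃ H : Ω → ℝ, MemLp H (ENNReal.ofReal p) μ ∧
      ∀ f : Ω → ℝ, Measurable f → (∃ M : ℝ, ∀ ω, |f ω| ≤ M) →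
        Tendsto (fun n => ∫ ω, f ω * L n ω ∂μ)
          ((Ultrafilter.of atTop : Ultrafilter ℕ) : Filter ℕ) (𝓝 (∫ ω, f ω * H ω ∂μ)) := by
  have hP1 : (1 : ENNReal) ≤ ENNReal.ofReal p := by
    rw [ENNReal.one_le_ofReal]; exact hpq.symm.lt.le
  set U : Ultrafilter ℕ := Ultrafilter.of atTop with hU_def
  set Kp : ℕ → Ω → ℝ := fun n ω => max (L n ω) 0 with hKp_def
  set Kn : ℕ → Ω → ℝ := fun n ω => max (-(L n ω)) 0 with hKn_def
  have hKp_mem : ∀ n, MemLp (Kp n) (ENNReal.ofReal p) μ := by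
    intro n
    refine ⟨((hL n).1.aemeasurable.max aemeasurable_const).aestronglyMeasurable, ?_⟩
    refine lt_of_le_of_lt (eLpNorm_mono fun ω => ?_) (hL n).2
    rw [Real.norm_eq_abs, Real.norm_eq_abs]
    rw [abs_of_nonneg (le_max_right _ _)]
    exact max_le (le_abs_self _) (abs_nonneg _)
  have hKn_mem : ∀ n, MemLp (Kn n) (ENNReal.ofReal p) μ := by
    intro n
    refine ⟨((hL n).1.aemeasurable.neg.max aemeasurable_const).aestronglyMeasurable, ?_⟩
    refine lt_of_le_of_lt (eLpNorm_mono fun ω => ?_) (hL n).2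
    rw [Real.norm_eq_abs, Real.norm_eq_abs]
    rw [abs_of_nonneg (le_max_right _ _)]
    exact max_le ((neg_le_abs _)) (abs_nonneg _)
  have hKp_C : ∀ n, eLpNorm (Kp n) (ENNReal.ofReal p) μ ≤ ENNReal.ofReal C := by
    intro n
    refine le_trans (eLpNorm_mono fun ω => ?_) (hC n)
    rw [Real.norm_eq_abs, Real.norm_eq_abs, abs_of_nonneg (le_max_right _ _)]
    exact max_le (le_abs_self _) (abs_nonneg _)
  have hKn_C : ∀ n, eLpNorm (Kn n) (ENNReal.ofReal p) μ ≤ ENNReal.ofReal C := by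
    intro n
    refine le_trans (eLpNorm_mono fun ω => ?_) (hC n)
    rw [Real.norm_eq_abs, Real.norm_eq_abs, abs_of_nonneg (le_max_right _ _)]
    exact max_le ((neg_le_abs _)) (abs_nonneg _)
  obtain ⟨Wp, hWp_meas, hWp0, hWp_mem, hWp⟩ := exists_W_nonneg μ U p q hpq Kp hKp_mem
    (fun n ω => le_max_right _ _) C hC0 hKp_C
  obtain ⟨Wn, hWn_meas, hWn0, hWn_mem, hWn⟩ := exists_W_nonneg μ U p q hpq Kn hKn_mem
    (fun n ω => le_max_right _ _) C hC0 hKn_C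
  refine ⟨fun ω => Wp ω - Wn ω, hWp_mem.sub hWn_mem, ?_⟩
  rintro f hfm ⟨M, hM⟩
  have hfb : ∀ᵐ x ∂μ, ‖f x‖ ≤ M := Eventually.of_forall fun x => by rw [Real.norm_eq_abs]; exact hM x
  have e1 : ∀ n, ∫ ω, f ω * L n ω ∂μ = ∫ ω, f ω * Kp n ω ∂μ - ∫ ω, f ω * Kn n ω ∂μ := by
    intro n
    rw [← integral_sub (((hKp_mem n).integrable hP1).bdd_mul hfm.aestronglyMeasurable hfb)
      (((hKn_mem n).integrable hP1).bdd_mul hfm.aestronglyMeasurable hfb)]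
    congr 1
    funext ω
    have : Kp n ω - Kn n ω = L n ω := max_zero_sub_max_neg_zero_eq_self (L n ω)
    rw [← this]
    ring
  have e2 : ∫ ω, f ω * (Wp ω - Wn ω) ∂μ = ∫ ω, f ω * Wp ω ∂μ - ∫ ω, f ω * Wn ω ∂μ := by
    rw [← integral_sub ((hWp_mem.integrable hP1).bdd_mul hfm.aestronglyMeasurable hfb)
      ((hWn_mem.integrable hP1).bdd_mul hfm.aestronglyMeasurable hfb)]
    congr 1
    funext ω
    ring
  simp only [e1, e2]
  exact (hWp f hfm ⟨M, hM⟩).sub (hWn f hfm ⟨M, hM⟩)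


end Main


theorem stmt2 {Ω : Type*} [MeasurableSpace Ω] (μ : Measure Ω) [IsProbabilityMeasure μ]
    (d : ℕ) (hd : 1 ≤ d) (α : Fin d → ℕ) (m : ℕ) (hαm : ∑ i, α i = m) (hm : 1 ≤ m)
    (p : ℝ) (hp : 1 < p)
    (X : ℕ → Ω → EuclideanSpace ℝ (Fin d)) (Xlim : Ω → EuclideanSpace ℝ (Fin d))
    (hXmeas : ∀ n, Measurable (X n)) (hXlimmeas : Measurable Xlim)
    (has : ∀ᵐ ω ∂μ, Tendsto (fun n => X n ω) atTop (𝓝 (Xlim ω)))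
    (G : Ω → ℝ) (hGmeas : Measurable G) (CG : ℝ) (hG : ∀ ω, |G ω| ≤ CG)
    (L : ℕ → Ω → ℝ) (hL : ∀ n, MemLp (L n) (ENNReal.ofReal p) μ)
    (C : ℝ) (hC : ∀ n, eLpNorm (L n) (ENNReal.ofReal p) μ ≤ ENNReal.ofReal C)
    (hibp : ∀ n, ∀ g : EuclideanSpace ℝ (Fin d) → ℝ, CmBounded m g →
      ∫ ω, mderiv α g (X n ω) * G ω ∂μ = ∫ ω, g (X n ω) * L n ω ∂μ) :
    ∃ H : Ω → ℝ, MemLp H (ENNReal.ofReal p) μ ∧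
      ∀ g : EuclideanSpace ℝ (Fin d) → ℝ, CmBounded m g →
        ∫ ω, mderiv α g (Xlim ω) * G ω ∂μ = ∫ ω, g (Xlim ω) * H ω ∂μ := by
  have hp0 : (0:ℝ) < p := lt_trans zero_lt_one hp
  have hP1 : (1 : ENNReal) ≤ ENNReal.ofReal p := by
    rw [ENNReal.one_le_ofReal]; exact hp.le
  set C' : ℝ := max C 0 with hC'_def
  have hC'0 : 0 ≤ C' := le_max_right _ _
  have hC' : ∀ n, eLpNorm (L n) (ENNReal.ofReal p) μ ≤ ENNReal.ofReal C' := fun n =>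
    (hC n).trans (ENNReal.ofReal_le_ofReal (le_max_left _ _))
  set q : ℝ := Real.conjExponent p with hq_def
  have hpq' : p.HolderConjugate q := Real.HolderConjugate.conjExponent hp
  have hpq : q.HolderConjugate p := hpq'.symm
  have hq0 : 0 < q := hpq.pos
  obtain ⟨H, hHmem, hH⟩ := exists_H_signed μ p q hpq L hL C' hC'0 hC'
  refine ⟨H, hHmem, fun g hg => ?_⟩
  have hgc : Continuous g := hg.1.continuous
  obtain ⟨B₀, hB₀'⟩ := hg.2 0 (Nat.zero_le m)
  have hB₀ : ∀ x, |g x| ≤ B₀ := fun x => by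
    have := hB₀' x
    rwa [norm_iteratedFDeriv_zero, Real.norm_eq_abs] at this
  obtain ⟨hmdc, B, hB0, hB⟩ := cmb_zero_bound (cmb_mderiv α hαm hg)
  have hGint : Integrable G μ :=
    (MemLp.of_bound hGmeas.aestronglyMeasurable CG
      (Eventually.of_forall fun ω => by rw [Real.norm_eq_abs]; exact hG ω)).integrable
      (le_refl 1)
  have A1 : Tendsto (fun n => ∫ ω, mderiv α g (X n ω) * G ω ∂μ) atTop
      (𝓝 (∫ ω, mderiv α g (Xlim ω) * G ω ∂μ)) := by
    apply tendsto_integral_of_dominated_convergence (fun ω => B * |G ω|)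
    · intro n
      exact ((hmdc.measurable.comp (hXmeas n)).mul hGmeas).aestronglyMeasurable
    · exact hGint.abs.const_mul B
    · intro n
      refine Eventually.of_forall fun ω => ?_
      rw [Real.norm_eq_abs, abs_mul]
      exact mul_le_mul_of_nonneg_right (hB _) (abs_nonneg _)
    · filter_upwards [has] with ω hω
      exact ((hmdc.tendsto (Xlim ω)).comp hω).mul_const (G ω)
  set df : ℕ → Ω → ℝ := fun n ω => g (X n ω) - g (Xlim ω) with hdf_def
  have hdf_meas : ∀ n, Measurable (df n) := fun n =>
    (hgc.measurable.comp (hXmeas n)).sub (hgc.measurable.comp hXlimmeas)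
  have hdf_bd : ∀ n ω, |df n ω| ≤ 2 * B₀ := by
    intro n ω
    calc |df n ω| ≤ |g (X n ω)| + |g (Xlim ω)| := abs_sub _ _
      _ ≤ B₀ + B₀ := add_le_add (hB₀ _) (hB₀ _)
      _ = 2 * B₀ := by ring
  set e : ℕ → ℝ := fun n => ∫ ω, |df n ω| ^ q ∂μ with he_def
  have he_meas : ∀ n, AEStronglyMeasurable (fun ω => |df n ω| ^ q) μ := fun n =>
    ((((Real.continuous_rpow_const hq0.le).comp continuous_abs).measurable).comp
      (hdf_meas n)).aestronglyMeasurable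
  have he0 : Tendsto e atTop (𝓝 0) := by
    have h0 : (0:ℝ) = ∫ (_ : Ω), (0:ℝ) ∂μ := by simp
    rw [he_def, h0]
    apply tendsto_integral_of_dominated_convergence (fun _ => (2 * B₀) ^ q) he_meas
      (integrable_const _)
    · intro n
      refine Eventually.of_forall fun ω => ?_
      rw [Real.norm_eq_abs, abs_of_nonneg (Real.rpow_nonneg (abs_nonneg _) q)]
      exact Real.rpow_le_rpow (abs_nonneg _) (hdf_bd n ω) hq0.le
    · filter_upwards [has] with ω hω
      have h1 : Tendsto (fun n => |df n ω|) atTop (𝓝 0) := by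
        have h2 : Tendsto (fun n => g (X n ω)) atTop (𝓝 (g (Xlim ω))) :=
          (hgc.tendsto (Xlim ω)).comp hω
        have := (h2.sub (tendsto_const_nhds (x := g (Xlim ω)))).abs
        simpa using this
      have h2 := ((Real.continuousAt_rpow_const 0 q (Or.inr hq0.le)).tendsto).comp h1
      rwa [Real.zero_rpow hq0.ne'] at h2
  have A2 : Tendsto (fun n => ∫ ω, df n ω * L n ω ∂μ) atTop (𝓝 0) := by
    have hrhs : Tendsto (fun n => C' * (e n) ^ (1 / q)) atTop (𝓝 0) := by
      have h2 : Tendsto (fun n => (e n) ^ (1 / q)) atTop (𝓝 ((0:ℝ) ^ (1 / q))) :=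
        ((Real.continuousAt_rpow_const 0 (1 / q) (Or.inr (by positivity))).tendsto).comp he0
      rw [Real.zero_rpow (by positivity : (1:ℝ)/q ≠ 0)] at h2
      simpa using h2.const_mul C'
    apply squeeze_zero_norm (fun n => ?_) hrhs
    rw [Real.norm_eq_abs]
    exact key_holder μ hpq (hdf_meas n).aestronglyMeasurable (hdf_bd n) (hL n) hC'0 (hC' n)
  have A3 : ∀ n, ∫ ω, g (Xlim ω) * L n ω ∂μ
      = ∫ ω, mderiv α g (X n ω) * G ω ∂μ - ∫ ω, df n ω * L n ω ∂μ := by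
    intro n
    have hLi : Integrable (L n) μ := (hL n).integrable hP1
    have i1 : Integrable (fun ω => g (X n ω) * L n ω) μ :=
      hLi.bdd_mul (hgc.measurable.comp (hXmeas n)).aestronglyMeasurable
        (Eventually.of_forall fun x => by rw [Real.norm_eq_abs]; exact hB₀ _)
    have i2 : Integrable (fun ω => df n ω * L n ω) μ :=
      hLi.bdd_mul (hdf_meas n).aestronglyMeasurable
        (Eventually.of_forall fun x => by rw [Real.norm_eq_abs]; exact hdf_bd n x)
    rw [hibp n g hg]
    rw [← integral_sub i1 i2]
    congr 1
    funext ω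
    simp only [hdf_def]
    ring
  have A4 : Tendsto (fun n => ∫ ω, g (Xlim ω) * L n ω ∂μ) atTop
      (𝓝 (∫ ω, mderiv α g (Xlim ω) * G ω ∂μ)) := by
    have he : (fun n => ∫ ω, g (Xlim ω) * L n ω ∂μ)
        = fun n => ∫ ω, mderiv α g (X n ω) * G ω ∂μ - ∫ ω, df n ω * L n ω ∂μ := by
      funext n; exact A3 n
    rw [he]
    have := A1.sub A2
    simpa using this
  have hflim : Tendsto (fun n => ∫ ω, g (Xlim ω) * L n ω ∂μ)
      ((Ultrafilter.of atTop : Ultrafilter ℕ) : Filter ℕ)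
      (𝓝 (∫ ω, g (Xlim ω) * H ω ∂μ)) :=
    hH (fun ω => g (Xlim ω)) (hgc.measurable.comp hXlimmeas) ⟨B₀, fun ω => hB₀ _⟩
  exact tendsto_nhds_unique (A4.mono_left (Ultrafilter.of_le atTop)) hflim
end

section
/- Let (Ω, F, P) be a probability space, d ≥ 1, and Q : Ω → M_{d×d}(ℝ) a measurable map whose values are almost surely symmetric positive semidefinite matrices. Suppose there exists c > 0 such that E[exp(−⟨Q(ω)x, x⟩)] ≤ exp(−c|x|^2) for every x ∈ ℝ^d. Then Q(ω) is almost surely positive definite, and for every p ≥ 1/2 one has E[(det Q)^{−p}] ≤ c^{−dp}. -/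
open MeasureTheory Filter Topology Matrix

lemma stmt6_aux {Ω : Type*} [MeasurableSpace Ω] (μ : Measure Ω) [IsProbabilityMeasure μ]
    (f : Ω → ℝ) (hf : Measurable f) (hf0 : ∀ᵐ ω ∂μ, 0 ≤ f ω) (L : ℝ)
    (hb : ∀ n : ℕ, ∫ ω, Real.exp (-(n * f ω)) ∂μ ≤ Real.exp (-(n * L))) :
    ∀ᵐ ω ∂μ, L ≤ f ω := by
  have hsub : ∀ ε : ℝ, 0 < ε → μ {ω | f ω ≤ L - ε} = 0 := by
    intro ε hε
    have hint : ∀ n : ℕ, Integrable (fun ω => Real.exp (-(n * f ω))) μ := by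
      intro n
      refine (integrable_const (1 : ℝ)).mono' ((hf.const_mul _).neg.exp).aestronglyMeasurable ?_
      filter_upwards [hf0] with ω hω
      rw [Real.norm_eq_abs, abs_of_pos (Real.exp_pos _)]
      exact Real.exp_le_one_iff.2 (neg_nonpos.2 (mul_nonneg (Nat.cast_nonneg n) hω))
    have hmono : ∀ n : ℕ, (μ {ω | f ω ≤ L - ε}).toReal ≤ Real.exp (-(n * ε)) := by
      intro n
      have hsubset : {ω | f ω ≤ L - ε} ⊆ {ω | Real.exp (-(n * (L - ε))) ≤ Real.exp (-(n * f ω))} := by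
        intro ω hω
        simp only [Set.mem_setOf_eq] at hω ⊢
        exact Real.exp_le_exp.2 (by nlinarith [Nat.cast_nonneg (α := ℝ) n])
      have hmarkov := mul_meas_ge_le_integral_of_nonneg
        (f := fun ω => Real.exp (-(n * f ω)))
        (Eventually.of_forall fun ω => (Real.exp_pos _).le) (hint n)
        (Real.exp (-(n * (L - ε))))
      have h1 : Real.exp (-(n * (L - ε))) * (μ {ω | f ω ≤ L - ε}).toReal
          ≤ Real.exp (-(n * L)) := by
        refine le_trans (mul_le_mul_of_nonneg_left
          (ENNReal.toReal_mono (measure_ne_top _ _) (measure_mono hsubset))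
          (Real.exp_pos _).le) (hmarkov.trans (hb n))
      have h2 : (μ {ω | f ω ≤ L - ε}).toReal
          ≤ Real.exp (-(n * L)) / Real.exp (-(n * (L - ε))) :=
        (le_div_iff₀ (Real.exp_pos _)).2 (by linarith [h1])
      calc (μ {ω | f ω ≤ L - ε}).toReal
          ≤ Real.exp (-(n * L)) / Real.exp (-(n * (L - ε))) := h2
        _ = Real.exp (-(n * ε)) := by
            rw [← Real.exp_sub]; ring_nf
    have htend : Tendsto (fun n : ℕ => Real.exp (-(n * ε))) atTop (𝓝 0) := by
      apply Real.tendsto_exp_atBot.comp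
      apply tendsto_neg_atBot_iff.2
      exact Tendsto.atTop_mul_const hε tendsto_natCast_atTop_atTop
    have h0 : (μ {ω | f ω ≤ L - ε}).toReal ≤ 0 :=
      ge_of_tendsto htend (Eventually.of_forall hmono)
    have := le_antisymm h0 ENNReal.toReal_nonneg
    exact (ENNReal.toReal_eq_zero_iff _).1 this |>.resolve_right (measure_ne_top _ _)
  rw [MeasureTheory.ae_iff]
  have hcover : {ω | ¬ L ≤ f ω} ⊆ ⋃ k : ℕ, {ω | f ω ≤ L - 1 / (k + 1)} := by
    intro ω hω
    simp only [Set.mem_setOf_eq, not_le] at hω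
    obtain ⟨k, hk⟩ := exists_nat_one_div_lt (by linarith : 0 < L - f ω)
    exact Set.mem_iUnion.2 ⟨k, by simp only [Set.mem_setOf_eq]; linarith⟩
  refine le_antisymm ?_ zero_le
  refine le_trans (measure_mono hcover) ?_
  rw [show (0 : ENNReal) = ∑' (_ : ℕ), (0:ENNReal) by simp]
  refine le_trans (measure_iUnion_le _) ?_
  exact ENNReal.tsum_le_tsum fun k => le_of_eq (hsub _ (by positivity))

/-- Let `Q` be a random `d×d` matrix, a.s. symmetric positive
semidefinite, such that `E[exp(−⟨Qx, x⟩)] ≤ exp(−c|x|²)` for every `x ∈ ℝ^d` and some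
`c > 0`. Then `Q` is a.s. positive definite and `E[(det Q)^{−p}] ≤ c^{−dp}` for every
`p ≥ 1/2`. -/
theorem stmt6 {Ω : Type*} [MeasurableSpace Ω] (μ : Measure Ω) [IsProbabilityMeasure μ]
    (d : ℕ) (hd : 1 ≤ d) (Q : Ω → Matrix (Fin d) (Fin d) ℝ) (hQmeas : ∀ i j, Measurable fun ω => Q ω i j)
    (hpsd : ∀ᵐ ω ∂μ, (Q ω).PosSemidef)
    (c : ℝ) (hc : 0 < c)
    (hbound : ∀ x : Fin d → ℝ,
      ∫ ω, Real.exp (-((Q ω).mulVec x ⬝ᵥ x)) ∂μ ≤ Real.exp (-c * ∑ i, x i ^ 2)) :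
    (∀ᵐ ω ∂μ, (Q ω).PosDef) ∧
      ∀ p : ℝ, 1 / 2 ≤ p →
        ∫⁻ ω, ENNReal.ofReal ((Q ω).det ^ (-p)) ∂μ
          ≤ ENNReal.ofReal (c ^ (-(d : ℝ) * p)) := by
  -- Step 1: for every fixed x, a.s. c|x|² ≤ ⟨Qx,x⟩
  have key : ∀ x : Fin d → ℝ, ∀ᵐ ω ∂μ, c * ∑ i, x i ^ 2 ≤ (Q ω).mulVec x ⬝ᵥ x := by
    intro x
    have hfmeas : Measurable fun ω => (Q ω).mulVec x ⬝ᵥ x := by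
      simp only [Matrix.mulVec, dotProduct]
      exact Finset.measurable_sum _ fun i _ =>
        (Finset.measurable_sum _ fun j _ => (hQmeas i j).mul measurable_const).mul
          measurable_const
    have hf0 : ∀ᵐ ω ∂μ, 0 ≤ (Q ω).mulVec x ⬝ᵥ x := by
      filter_upwards [hpsd] with ω hω
      simpa [dotProduct_comm] using hω.dotProduct_mulVec_nonneg x
    refine stmt6_aux μ _ hfmeas hf0 _ ?_
    intro n
    have := hbound (Real.sqrt n • x)
    have hsq : (Real.sqrt n) ^ 2 = (n : ℝ) := Real.sq_sqrt (Nat.cast_nonneg n)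
    have e1 : ∀ ω, (Q ω).mulVec (Real.sqrt n • x) ⬝ᵥ (Real.sqrt n • x)
        = n * ((Q ω).mulVec x ⬝ᵥ x) := by
      intro ω
      rw [Matrix.mulVec_smul, smul_dotProduct, dotProduct_smul]
      rw [smul_eq_mul, smul_eq_mul, ← mul_assoc, ← pow_two, hsq]
    have e2 : -c * ∑ i, (Real.sqrt n • x) i ^ 2 = -(n * (c * ∑ i, x i ^ 2)) := by
      simp only [Pi.smul_apply, smul_eq_mul, mul_pow, hsq, ← Finset.mul_sum]
      ring
    simp only [e1, e2] at this
    exact this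
  -- Step 2: a.s., for all x, c|x|² ≤ ⟨Qx,x⟩
  have key2 : ∀ᵐ ω ∂μ, (Q ω).PosSemidef ∧
      ∀ x : Fin d → ℝ, c * ∑ i, x i ^ 2 ≤ (Q ω).mulVec x ⬝ᵥ x := by
    have hrat : ∀ᵐ ω ∂μ, ∀ q : Fin d → ℚ,
        c * ∑ i, ((q i : ℝ)) ^ 2 ≤ (Q ω).mulVec (fun i => (q i : ℝ)) ⬝ᵥ (fun i => (q i : ℝ)) :=
      ae_all_iff.2 fun q => key fun i => (q i : ℝ)
    filter_upwards [hpsd, hrat] with ω hω hq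
    refine ⟨hω, ?_⟩
    have hcont : Continuous fun x : Fin d → ℝ =>
        ((Q ω).mulVec x ⬝ᵥ x) - c * ∑ i, x i ^ 2 := by
      simp only [Matrix.mulVec, dotProduct]
      refine Continuous.sub ?_ (continuous_const.mul ?_)
      · exact continuous_finset_sum _ fun i _ =>
          (continuous_finset_sum _ fun j _ => (continuous_const.mul (continuous_apply j))).mul
            (continuous_apply i)
      · exact continuous_finset_sum _ fun i _ => (continuous_apply i).pow 2
    have hclosed : IsClosed {x : Fin d → ℝ | 0 ≤ ((Q ω).mulVec x ⬝ᵥ x) - c * ∑ i, x i ^ 2} :=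
      isClosed_le continuous_const hcont
    have hdense : Dense (Set.pi Set.univ fun _ : Fin d => Set.range ((↑) : ℚ → ℝ)) :=
      dense_pi Set.univ fun i _ => Rat.denseRange_cast
    have hsub : (Set.pi Set.univ fun _ : Fin d => Set.range ((↑) : ℚ → ℝ)) ⊆
        {x : Fin d → ℝ | 0 ≤ ((Q ω).mulVec x ⬝ᵥ x) - c * ∑ i, x i ^ 2} := by
      intro x hx
      choose q hqe using fun i => hx i (Set.mem_univ i)
      have hxq : x = fun i => (q i : ℝ) := funext fun i => (hqe i).symm
      simp only [Set.mem_setOf_eq, hxq, sub_nonneg]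
      exact hq q
    have hset : {x : Fin d → ℝ | 0 ≤ ((Q ω).mulVec x ⬝ᵥ x) - c * ∑ i, x i ^ 2} = Set.univ := by
      rw [← hclosed.closure_eq]
      exact (hdense.mono hsub).closure_eq
    intro x
    have : x ∈ {x : Fin d → ℝ | 0 ≤ ((Q ω).mulVec x ⬝ᵥ x) - c * ∑ i, x i ^ 2} := by
      rw [hset]; trivial
    simp only [Set.mem_setOf_eq, sub_nonneg] at this
    exact this
  -- Step 3: conclusions
  have hposdef : ∀ᵐ ω ∂μ, (Q ω).PosDef := by
    filter_upwards [key2] with ω ⟨hpsdω, hlow⟩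
    refine PosDef.of_dotProduct_mulVec_pos hpsdω.1 fun x hx => ?_
    have hsum : 0 < ∑ i, x i ^ 2 := by
      obtain ⟨i, hi⟩ := Function.ne_iff.1 hx
      exact Finset.sum_pos' (fun j _ => sq_nonneg _) ⟨i, Finset.mem_univ i, pow_two_pos_of_ne_zero (by simpa using hi)⟩
    have := hlow x
    have hsx : star x = x := by simp
    rw [hsx, dotProduct_comm]
    nlinarith
  refine ⟨hposdef, fun p hp => ?_⟩
  have hdet : ∀ᵐ ω ∂μ, c ^ d ≤ (Q ω).det := by
    filter_upwards [key2] with ω ⟨hpsdω, hlow⟩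
    have hH : (Q ω).IsHermitian := hpsdω.1
    have heig : ∀ i, c ≤ hH.eigenvalues i := by
      intro i
      have hmv := hH.mulVec_eigenvectorBasis i
      set w : Fin d → ℝ := ⇑(hH.eigenvectorBasis i) with hw
      have hnorm : ∑ j, w j ^ 2 = 1 := by
        have h2 : (inner ℝ (hH.eigenvectorBasis i) (hH.eigenvectorBasis i) : ℝ) = 1 := by
          rw [real_inner_self_eq_norm_sq, hH.eigenvectorBasis.orthonormal.1 i]; norm_num
        rw [PiLp.inner_apply] at h2
        simpa [RCLike.inner_apply, pow_two] using h2
      have hdot : Q ω *ᵥ w ⬝ᵥ w = hH.eigenvalues i * ∑ j, w j ^ 2 := by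
        rw [hmv, smul_dotProduct]
        simp only [smul_eq_mul, dotProduct, pow_two, Finset.mul_sum]
      have hl := hlow w
      rw [hdot, hnorm, mul_one] at hl
      linarith
    rw [hH.det_eq_prod_eigenvalues]
    calc (c : ℝ) ^ d = ∏ _i : Fin d, c := by simp
      _ ≤ ∏ i, hH.eigenvalues i := Finset.prod_le_prod (fun _ _ => hc.le) fun i _ => heig i
  have hp0 : 0 < p := lt_of_lt_of_le (by norm_num) hp
  have hbnd : ∀ᵐ ω ∂μ, ENNReal.ofReal ((Q ω).det ^ (-p)) ≤ ENNReal.ofReal (c ^ (-(d : ℝ) * p)) := by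
    filter_upwards [hdet] with ω hω
    refine ENNReal.ofReal_le_ofReal ?_
    have h1 : (Q ω).det ^ (-p) ≤ (c ^ d) ^ (-p) :=
      Real.rpow_le_rpow_of_nonpos (x := c ^ d) (by positivity) hω (by linarith)
    have h2 : (c ^ d : ℝ) ^ (-p) = c ^ (-(d : ℝ) * p) := by
      rw [← Real.rpow_natCast c d, ← Real.rpow_mul hc.le]
      ring_nf
    linarith [h1, h2.symm.le, h2.le]
  calc ∫⁻ ω, ENNReal.ofReal ((Q ω).det ^ (-p)) ∂μ
      ≤ ∫⁻ _, ENNReal.ofReal (c ^ (-(d : ℝ) * p)) ∂μ := lintegral_mono_ae hbnd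
    _ = ENNReal.ofReal (c ^ (-(d : ℝ) * p)) := by simp
end
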